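/- Let F be a field, p a monic polynomial of degree n over F, C its companion matrix, and E ∈ M_n(F) the matrix whose (1,n) entry is 1 and all other entries are 0. Let X ∈ M_n(F) commute with C and let T ∈ M_n(F) be arbitrary. Then TC = CT + EX holds if and only if X = 0 and T commutes with C. -/

import Mathlib

open Matrix Polynomial

/-- The companion matrix of a monic polynomial `p` of degree `n`:
ones on the first subdiagonal, `-(coefficients of p)` in the last column. -/
def companionMat (F : Type*) [Field F] (n : ℕ) (p : Polynomial F) :
    Matrix (Fin n) (Fin n) F :=
  Matrix.of fun i j =>
    if (j : ℕ) = n - 1 then -p.coeff (i : ℕ)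
    else if (i : ℕ) = (j : ℕ) + 1 then 1 else 0

/-- The matrix `E` whose `(1,n)` entry is `1` and all other entries are `0`. -/
def Emat (F : Type*) [Field F] (n : ℕ) : Matrix (Fin n) (Fin n) F :=
  Matrix.of fun i j => if (i : ℕ) = 0 ∧ (j : ℕ) = n - 1 then 1 else 0

section helpers
variable {F : Type*} [Field F] {m : ℕ} (p : Polynomial F)

lemma trace_Emat_mul (M : Matrix (Fin (m+1)) (Fin (m+1)) F) :
    Matrix.trace (Emat F (m+1) * M) = M (Fin.last m) 0 := by
  simp only [Matrix.trace, Matrix.diag, Matrix.mul_apply, Emat, Matrix.of_apply]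
  rw [Finset.sum_comm]
  rw [Finset.sum_eq_single (Fin.last m)]
  · rw [Finset.sum_eq_single (0 : Fin (m+1))]
    · simp [Fin.last]
    · intro b _ hb
      have hb' : (b : ℕ) ≠ 0 := fun hh => hb (Fin.ext hh)
      simp [hb']
    · simp
  · intro b _ hb
    apply Finset.sum_eq_zero
    intro i _
    have : (b : ℕ) ≠ m := by
      simpa [Fin.ext_iff, Fin.last] using hb
    simp [this]
  · simp

lemma companion_pow_col (k : ℕ) (hk : k ≤ m) :
    ∀ i : Fin (m+1), (companionMat F (m+1) p ^ k) i 0 = if (i : ℕ) = k then 1 else 0 := by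
  induction k with
  | zero => intro i; rw [pow_zero, Matrix.one_apply]; simp only [Fin.ext_iff, Fin.val_zero]
  | succ k ih =>
    intro i
    rw [pow_succ', Matrix.mul_apply]
    rw [Finset.sum_eq_single (⟨k, by omega⟩ : Fin (m+1))]
    · rw [ih (by omega)]
      simp only [if_pos rfl, mul_one]
      have hk' : (k : ℕ) ≠ m := by omega
      simp [companionMat, hk']
    · intro b _ hb
      rw [ih (by omega)]
      have : (b : ℕ) ≠ k := by simpa [Fin.ext_iff] using hb
      simp [this]
    · simp

end helpers

/-- for `X` commuting with the companion matrix `C` and `T` arbitrary,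
`TC = CT + EX` iff `X = 0` and `T` commutes with `C`. -/
theorem eq_TC_CT_EX
    {F : Type*} [Field F] {n : ℕ}
    (p : Polynomial F) (hmonic : p.Monic) (hdeg : p.natDegree = n)
    (X T : Matrix (Fin n) (Fin n) F)
    (hX : X * companionMat F n p = companionMat F n p * X) :
    T * companionMat F n p = companionMat F n p * T + Emat F n * X ↔
      (X = 0 ∧ T * companionMat F n p = companionMat F n p * T) := by
  constructor
  · intro h
    have hX0 : X = 0 := by
      rcases Nat.eq_zero_or_pos n with hn | hn
      · subst hn; ext i j; exact i.elim0
      obtain ⟨m, rfl⟩ : ∃ m, n = m + 1 := ⟨n - 1, by omega⟩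
      set C := companionMat F (m+1) p with hC
      have hEX : Emat F (m+1) * X = T * C - C * T := by rw [h]; abel
      have htr : ∀ k : ℕ, (X * C ^ k) (Fin.last m) 0 = 0 := by
        intro k
        have h0 : Matrix.trace (Emat F (m+1) * (X * C ^ k)) = 0 := by
          rw [← Matrix.mul_assoc, hEX, Matrix.sub_mul, Matrix.trace_sub, sub_eq_zero,
            Matrix.mul_assoc C T (C ^ k), Matrix.trace_mul_comm C (T * C ^ k),
            Matrix.mul_assoc T (C ^ k) C, ← pow_succ, Matrix.mul_assoc T C (C ^ k), ← pow_succ']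
        rw [trace_Emat_mul] at h0
        exact h0
      have hrowlast : ∀ j : Fin (m+1), X (Fin.last m) j = 0 := by
        intro j
        have h1 := htr (j : ℕ)
        rw [Matrix.mul_apply, Finset.sum_eq_single j] at h1
        · rw [companion_pow_col p (j : ℕ) j.is_le, if_pos rfl, mul_one] at h1
          exact h1
        · intro b _ hb
          rw [companion_pow_col p (j : ℕ) j.is_le]
          have : (b : ℕ) ≠ (j : ℕ) := fun hh => hb (Fin.ext hh)
          simp [this]
        · simp
      have hrow : ∀ k : ℕ, k ≤ m → ∀ j, X ⟨m - k, by omega⟩ j = 0 := by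
        intro k
        induction k with
        | zero =>
          intro _ j
          have : (⟨m - 0, by omega⟩ : Fin (m+1)) = Fin.last m := by
            simp [Fin.ext_iff, Fin.last]
          rw [this]; exact hrowlast j
        | succ k ih =>
          intro hk j
          have hc := congrFun (congrFun hX ⟨m - k, by omega⟩) j
          have hL : (X * C) ⟨m - k, by omega⟩ j = 0 := by
            rw [Matrix.mul_apply]
            apply Finset.sum_eq_zero
            intro t _
            rw [ih (by omega) t, zero_mul]
          have hR : (C * X) ⟨m - k, by omega⟩ j = X ⟨m - (k+1), by omega⟩ j := by
            rw [Matrix.mul_apply, Finset.sum_eq_single (⟨m - (k+1), by omega⟩ : Fin (m+1))]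
            · have h1 : (m - (k+1) : ℕ) ≠ m := by omega
              have h2 : (m - k : ℕ) = (m - (k+1)) + 1 := by omega
              simp [hC, companionMat, h1, h2]
            · intro b _ hb
              by_cases hbm : (b : ℕ) = m
              · have hb0 : X b j = 0 := by
                  have : b = Fin.last m := Fin.ext (by simpa [Fin.last] using hbm)
                  rw [this]; exact hrowlast j
                rw [hb0, mul_zero]
              · have h3 : (m - k : ℕ) ≠ (b : ℕ) + 1 := by
                  have : (b : ℕ) ≠ m - (k+1) := fun hh => hb (Fin.ext hh)
                  omega
                simp [hC, companionMat, hbm, h3]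
            · simp
          rw [hc, hR] at hL
          exact hL
      ext i j
      have hi : (i : ℕ) ≤ m := i.is_le
      have h1 := hrow (m - (i : ℕ)) (by omega) j
      have heq : (⟨m - (m - (i : ℕ)), by omega⟩ : Fin (m+1)) = i := Fin.ext (by simp; omega)
      rw [heq] at h1
      simpa using h1
    refine ⟨hX0, ?_⟩
    rw [hX0] at h
    simpa using h
  · rintro ⟨rfl, hT⟩
    simpa using hT
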